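/- arXiv:2207.07083 — 2 statements merged into one kernel-verified Lean document; each statement's English description precedes it below -/
import Mathlib

section
/- The symmetrization map ψ : Sym(g) → U(g), defined on a product of Lie algebra elements by ψ(y₁ ⊙ … ⊙ y_m) = (1/m!) Σ_{σ ∈ S_m} ι y_{σ(1)} ⋯ ι y_{σ(m)}, is a morphism of coalgebras: (ψ ⊗ ψ) ∘ Δ_Sym = Δ_U ∘ ψ, where Δ_Sym and Δ_U are the standard comultiplications on the symmetric algebra and the universal enveloping algebra. -/
open UniversalEnvelopingAlgebra TensorProduct

open Finset in
/-- Inclusion-exclusion sign sum: the alternating sum over supersets of `I`. -/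
lemma polar_aux {α : Type*} [Fintype α] [DecidableEq α] (I : Finset α) :
    ∑ T : Finset α, (if I ⊆ T then ((-1 : ℤ) ^ (Fintype.card α - T.card)) else 0)
      = if I = univ then 1 else 0 := by
  rw [← Finset.sum_filter]
  have h1 : ∑ T ∈ univ.filter (fun T => I ⊆ T), ((-1:ℤ) ^ (Fintype.card α - T.card))
      = ∑ T' ∈ Iᶜ.powerset, ((-1:ℤ) ^ (Iᶜ.card - T'.card)) := by
    refine Finset.sum_nbij' (fun T => T \ I) (fun T' => T' ∪ I) ?_ ?_ ?_ ?_ ?_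
    · intro T hT
      simp only [mem_filter, mem_univ, true_and] at hT
      simp only [mem_powerset]
      intro x hx
      simp only [mem_sdiff] at hx
      simp [mem_compl, hx.2]
    · intro T' hT'
      simp only [mem_powerset] at hT'
      simp only [mem_filter, mem_univ, true_and]
      exact subset_union_right
    · intro T hT
      simp only [mem_filter, mem_univ, true_and] at hT
      exact Finset.sdiff_union_of_subset hT
    · intro T' hT'
      simp only [mem_powerset] at hT'
      have hd : Disjoint T' I := by
        rw [Finset.disjoint_left]
        intro a haT' haI
        exact (Finset.mem_compl.1 (hT' haT')) haI
      show (T' ∪ I) \ I = T'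
      rw [Finset.union_sdiff_right, Finset.sdiff_eq_self_of_disjoint hd]
    · intro T hT
      simp only [mem_filter, mem_univ, true_and] at hT
      show ((-1:ℤ) ^ (Fintype.card α - T.card)) = (-1:ℤ) ^ (Iᶜ.card - (T \ I).card)
      congr 1
      have h2 : (T \ I).card = T.card - I.card := Finset.card_sdiff_of_subset hT
      have h3 : Iᶜ.card = Fintype.card α - I.card := Finset.card_compl I
      have h4 : I.card ≤ T.card := Finset.card_le_card hT
      have h5 : T.card ≤ Fintype.card α := Finset.card_le_univ T
      omega
  rw [h1]
  have h6 : ∀ T' ∈ Iᶜ.powerset, ((-1:ℤ) ^ (Iᶜ.card - T'.card))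
      = (-1:ℤ) ^ Iᶜ.card * (-1:ℤ) ^ T'.card := by
    intro T' hT'
    have hle : T'.card ≤ Iᶜ.card := Finset.card_le_card (mem_powerset.1 hT')
    have h7 : ((-1:ℤ) ^ (Iᶜ.card - T'.card)) = (-1:ℤ) ^ (Iᶜ.card + T'.card) := by
      conv_rhs => rw [show Iᶜ.card + T'.card = (Iᶜ.card - T'.card) + 2 * T'.card by omega]
      rw [pow_add, pow_mul, neg_one_sq, one_pow, mul_one]
    rw [h7, pow_add]
  rw [Finset.sum_congr rfl h6, ← Finset.mul_sum, Finset.sum_powerset_neg_one_pow_card]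
  by_cases h : I = univ
  · simp [h]
  · have : Iᶜ ≠ ∅ := by
      simp only [ne_eq, Finset.compl_eq_empty_iff]
      exact h
    simp [h, this]

open Finset in
/-- The polarization identity in a commutative ring. -/
lemma polar_identity {R : Type*} [CommRing R] (m : ℕ) (x : Fin m → R) :
    ∑ T : Finset (Fin m), ((-1 : ℤ) ^ (m - T.card)) • (∑ i ∈ T, x i) ^ m
      = m.factorial • ∏ i, x i := by
  classical
  have h2 : ∀ T : Finset (Fin m),
      Fintype.piFinset (fun _ : Fin m => T)
        = (Fintype.piFinset (fun _ : Fin m => (univ : Finset (Fin m)))).filter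
            (fun u => Finset.image u univ ⊆ T) := by
    intro T
    ext u
    simp [Fintype.mem_piFinset, Finset.image_subset_iff]
  calc ∑ T : Finset (Fin m), ((-1 : ℤ) ^ (m - T.card)) • (∑ i ∈ T, x i) ^ m
      = ∑ T : Finset (Fin m),
          ∑ u ∈ Fintype.piFinset (fun _ : Fin m => (univ : Finset (Fin m))),
          (if Finset.image u univ ⊆ T then ((-1 : ℤ) ^ (m - T.card)) • ∏ j, x (u j) else 0) := by
        refine Finset.sum_congr rfl fun T _ => ?_
        rw [Finset.sum_pow' T x m, h2, Finset.smul_sum, ← Finset.sum_filter]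
    _ = ∑ u ∈ Fintype.piFinset (fun _ : Fin m => (univ : Finset (Fin m))),
          (∑ T : Finset (Fin m),
            if Finset.image u univ ⊆ T then ((-1 : ℤ) ^ (m - T.card)) else 0) • ∏ j, x (u j) := by
        rw [Finset.sum_comm]
        refine Finset.sum_congr rfl fun u _ => ?_
        rw [Finset.sum_smul]
        refine Finset.sum_congr rfl fun T _ => ?_
        rw [ite_smul, zero_smul]
    _ = ∑ u ∈ Fintype.piFinset (fun _ : Fin m => (univ : Finset (Fin m))),
          (if Finset.image u univ = univ then (1:ℤ) else 0) • ∏ j, x (u j) := by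
        refine Finset.sum_congr rfl fun u _ => ?_
        have := polar_aux (Finset.image u univ)
        simp only [Fintype.card_fin] at this
        rw [this]
    _ = ∑ u ∈ (Fintype.piFinset (fun _ : Fin m => (univ : Finset (Fin m)))).filter
          (fun u => Finset.image u univ = univ), ∏ j, x (u j) := by
        simp only [ite_smul, one_smul, zero_smul, Finset.sum_filter]
    _ = ∑ _σ : Equiv.Perm (Fin m), ∏ i, x i := by
        have h3 : ∀ u : Fin m → Fin m, Finset.image u univ = univ → Function.Bijective u := by
          intro u hu
          have hsurj : Function.Surjective u := by
            intro b
            have : b ∈ Finset.image u univ := by rw [hu]; exact Finset.mem_univ b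
            obtain ⟨a, _, ha⟩ := Finset.mem_image.1 this
            exact ⟨a, ha⟩
          exact Finite.surjective_iff_bijective.1 hsurj
        refine Finset.sum_bij'
          (fun u hu => Equiv.ofBijective u (h3 u (Finset.mem_filter.1 hu).2))
          (fun σ _ => ⇑σ) ?_ ?_ ?_ ?_ ?_
        · intro u hu
          exact Finset.mem_univ _
        · intro σ _
          simp only [Finset.mem_filter, Fintype.mem_piFinset, Finset.mem_univ, implies_true,
            true_and]
          ext b
          simp only [Finset.mem_image, Finset.mem_univ, true_and, iff_true]
          exact ⟨σ.symm b, σ.apply_symm_apply b⟩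
        · intro u hu
          rfl
        · intro σ _
          exact Equiv.ext fun a => rfl
        · intro u hu
          exact Equiv.prod_comp (Equiv.ofBijective u (h3 u (Finset.mem_filter.1 hu).2)) x
    _ = m.factorial • ∏ i, x i := by
        rw [Finset.sum_const, Finset.card_univ, Fintype.card_perm, Fintype.card_fin]

/-- The symmetrization map `ψ : Sym(g) → U(g)`, defined on products of Lie
algebra generators by `ψ (y₁ ⊙ ⋯ ⊙ y_m) = (1/m!) ∑_{σ ∈ S_m} ι y_{σ(1)} ⋯ ι y_{σ(m)}`,
is a morphism of coalgebras: `(ψ ⊗ ψ) ∘ Δ_Sym = Δ_U ∘ ψ`.  Here the symmetric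
algebra is modelled by a commutative algebra `S` generated by the image of a
linear map `ιS : g → S`, with comultiplication `ΔS` determined by
`ΔS (ιS y) = ιS y ⊗ 1 + 1 ⊗ ιS y`, and `Δ_U` is the standard comultiplication
of `U(g)`. -/
theorem symmetrization_coalgebra_morphism (k : Type*) [Field k] [CharZero k]
    (g : Type*) [LieRing g] [LieAlgebra k g]
    (S : Type*) [CommRing S] [Algebra k S]
    (ιS : g →ₗ[k] S)
    -- products of generators span the symmetric algebra
    (hspan : Submodule.span k
      {a : S | ∃ (m : ℕ) (y : Fin m → g), a = (List.ofFn fun i => ιS (y i)).prod} = ⊤)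
    (ΔS : S →ₐ[k] S ⊗[k] S)
    (hΔS : ∀ y : g, ΔS (ιS y) = ιS y ⊗ₜ[k] 1 + 1 ⊗ₜ[k] ιS y)
    (ΔU : UniversalEnvelopingAlgebra k g →ₐ[k]
      (UniversalEnvelopingAlgebra k g ⊗[k] UniversalEnvelopingAlgebra k g))
    (hΔU : ∀ y : g, ΔU (ι k y) = ι k y ⊗ₜ[k] 1 + 1 ⊗ₜ[k] ι k y)
    (ψ : S →ₗ[k] UniversalEnvelopingAlgebra k g)
    (hψ : ∀ (m : ℕ) (y : Fin m → g),
      ψ (List.ofFn fun i => ιS (y i)).prod =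
        (m.factorial : k)⁻¹ •
          ∑ σ : Equiv.Perm (Fin m), (List.ofFn fun i => ι k (y (σ i))).prod) :
    (TensorProduct.map ψ ψ) ∘ₗ ΔS.toLinearMap = ΔU.toLinearMap ∘ₗ ψ := by
  classical
  -- ψ sends powers of generators to powers of generators
  have hψpow : ∀ (m : ℕ) (z : g), ψ (ιS z ^ m) = (ι k z) ^ m := by
    intro m z
    have hfac : (m.factorial : k) ≠ 0 := by exact_mod_cast m.factorial_ne_zero
    have h := hψ m (fun _ => z)
    simp only [List.ofFn_const, List.prod_replicate] at h
    rw [h, Finset.sum_const, Finset.card_univ, Fintype.card_perm, Fintype.card_fin,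
      ← Nat.cast_smul_eq_nsmul k, smul_smul, inv_mul_cancel₀ hfac, one_smul]
  -- the key computation on powers of a single generator
  have key : ∀ (m : ℕ) (z : g),
      TensorProduct.map ψ ψ (ΔS (ιS z ^ m)) = ΔU (ψ (ιS z ^ m)) := by
    intro m z
    rw [map_pow, hΔS z, add_pow, hψpow, map_pow, hΔU z]
    have hc : Commute ((ι k z) ⊗ₜ[k] (1 : UniversalEnvelopingAlgebra k g))
        ((1 : UniversalEnvelopingAlgebra k g) ⊗ₜ[k] (ι k z)) := by
      show _ = _
      simp [Algebra.TensorProduct.tmul_mul_tmul]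
    rw [hc.add_pow, map_sum]
    refine Finset.sum_congr rfl fun j _ => ?_
    have hL : (ιS z ⊗ₜ[k] (1:S)) ^ j * ((1:S) ⊗ₜ[k] ιS z) ^ (m - j)
        = (ιS z ^ j) ⊗ₜ[k] (ιS z ^ (m - j)) := by
      rw [Algebra.TensorProduct.tmul_pow, Algebra.TensorProduct.tmul_pow, one_pow, one_pow,
        Algebra.TensorProduct.tmul_mul_tmul, one_mul, mul_one]
    have hR : ((ι k z) ⊗ₜ[k] (1 : UniversalEnvelopingAlgebra k g)) ^ j
          * ((1 : UniversalEnvelopingAlgebra k g) ⊗ₜ[k] (ι k z)) ^ (m - j)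
        = ((ι k z) ^ j) ⊗ₜ[k] ((ι k z) ^ (m - j)) := by
      rw [Algebra.TensorProduct.tmul_pow, Algebra.TensorProduct.tmul_pow, one_pow, one_pow,
        Algebra.TensorProduct.tmul_mul_tmul, one_mul, mul_one]
    rw [hL, hR, mul_comm _ ((m.choose j : S ⊗[k] S)), ← nsmul_eq_mul,
      ← (Nat.cast_commute (m.choose j)
        (((ι k) z ^ j) ⊗ₜ[k] ((ι k) z ^ (m - j)))).eq,
      ← nsmul_eq_mul, map_nsmul, TensorProduct.map_tmul, hψpow, hψpow]
  -- reduce to generators using the span hypothesis and polarization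
  apply LinearMap.ext
  intro x
  have hx : x ∈ Submodule.span k
      {a : S | ∃ (m : ℕ) (y : Fin m → g), a = (List.ofFn fun i => ιS (y i)).prod} := by
    rw [hspan]; exact Submodule.mem_top
  simp only [LinearMap.coe_comp, Function.comp_apply, AlgHom.toLinearMap_apply]
  induction hx using Submodule.span_induction with
  | mem a ha =>
    obtain ⟨m, y, rfl⟩ := ha
    rw [List.prod_ofFn]
    have hfac : (m.factorial : k) ≠ 0 := by exact_mod_cast m.factorial_ne_zero
    have hpol : ∑ T : Finset (Fin m), ((-1 : ℤ) ^ (m - T.card)) • (ιS (∑ i ∈ T, y i)) ^ m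
        = m.factorial • ∏ i, ιS (y i) := by
      have := polar_identity m (fun i => ιS (y i))
      simpa [map_sum] using this
    have h1 : (m.factorial : k) • (TensorProduct.map ψ ψ (ΔS (∏ i, ιS (y i))))
        = ∑ T : Finset (Fin m), ((-1 : ℤ) ^ (m - T.card)) •
            (TensorProduct.map ψ ψ (ΔS ((ιS (∑ i ∈ T, y i)) ^ m))) := by
      rw [← map_smul (TensorProduct.map ψ ψ), ← map_smul ΔS,
        Nat.cast_smul_eq_nsmul, ← hpol, map_sum, map_sum]
      exact Finset.sum_congr rfl fun T _ => by rw [map_zsmul, map_zsmul]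
    have h2 : (m.factorial : k) • (ΔU (ψ (∏ i, ιS (y i))))
        = ∑ T : Finset (Fin m), ((-1 : ℤ) ^ (m - T.card)) •
            (ΔU (ψ ((ιS (∑ i ∈ T, y i)) ^ m))) := by
      rw [← map_smul ΔU, ← map_smul ψ,
        Nat.cast_smul_eq_nsmul, ← hpol, map_sum, map_sum]
      exact Finset.sum_congr rfl fun T _ => by rw [map_zsmul, map_zsmul]
    have h3 : (m.factorial : k) • (TensorProduct.map ψ ψ (ΔS (∏ i, ιS (y i))))
        = (m.factorial : k) • (ΔU (ψ (∏ i, ιS (y i)))) := by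
      rw [h1, h2]
      exact Finset.sum_congr rfl fun T _ => by rw [key m (∑ i ∈ T, y i)]
    have h4 := congrArg (fun t => (m.factorial : k)⁻¹ • t) h3
    simpa [smul_smul, inv_mul_cancel₀ hfac] using h4
  | zero => simp
  | add u v _ _ hu hv => simp [map_add, hu, hv]
  | smul c u _ hu => simp [map_smul, hu]
end

section
/- For a finite-dimensional Lie algebra g over a field of characteristic zero with ordered basis x₁ < … < x_n, and for any admissible index sequence A = {α₁ ≤ … ≤ α_m} and permutation σ ∈ S_m, the product z_{α_{σ(1)}} ⋯ z_{α_{σ(m)}} in U(g) (with z_α = ι x_α) equals z_{α₁} ⋯ z_{α_m} plus a linear combination of products of fewer than m generators; i.e., their difference lies in the span of the images of tensors of degree < m under the canonical map T(g) → U(g). -/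
open UniversalEnvelopingAlgebra

def lengthFiltration (k : Type*) [Field k] (g : Type*) [LieRing g] [LieAlgebra k g]
    (m : ℕ) : Submodule k (UniversalEnvelopingAlgebra k g) :=
  Submodule.span k
    {u | ∃ l : List g, l.length < m ∧ u = (l.map fun y => (ι k y : UniversalEnvelopingAlgebra k g)).prod}

lemma prod_mem_lengthFiltration (k : Type*) [Field k] (g : Type*) [LieRing g] [LieAlgebra k g]
    {m : ℕ} (l : List g) (h : l.length < m) :
    (l.map fun y => (ι k y : UniversalEnvelopingAlgebra k g)).prod ∈ lengthFiltration k g m :=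
  Submodule.subset_span ⟨l, h, rfl⟩

lemma mul_mem_lengthFiltration (k : Type*) [Field k] (g : Type*) [LieRing g] [LieAlgebra k g]
    {m : ℕ} (x : g) {u : UniversalEnvelopingAlgebra k g} (hu : u ∈ lengthFiltration k g m) :
    ι k x * u ∈ lengthFiltration k g (m + 1) := by
  induction hu using Submodule.span_induction with
  | mem u hu =>
    obtain ⟨l, hl, rfl⟩ := hu
    refine Submodule.subset_span ⟨x :: l, by simpa using hl, by simp⟩
  | zero => simpa using Submodule.zero_mem _
  | add u v _ _ hu hv => rw [mul_add]; exact Submodule.add_mem _ hu hv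
  | smul c u _ hu => rw [mul_smul_comm]; exact Submodule.smul_mem _ c hu

section

attribute [local instance] LieRing.ofAssociativeRing

lemma perm_sub_mem (k : Type*) [Field k] (g : Type*) [LieRing g] [LieAlgebra k g]
    {l l' : List g} (h : l.Perm l') :
    (l'.map fun y => (ι k y : UniversalEnvelopingAlgebra k g)).prod -
      (l.map fun y => (ι k y : UniversalEnvelopingAlgebra k g)).prod ∈
      lengthFiltration k g l.length := by
  induction h with
  | nil => simpa using Submodule.zero_mem _
  | cons x h ih =>
    simp only [List.map_cons, List.prod_cons, List.length_cons]
    rw [← mul_sub]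
    exact mul_mem_lengthFiltration k g x ih
  | swap x y l =>
    simp only [List.map_cons, List.prod_cons, List.length_cons]
    have : (ι k x : UniversalEnvelopingAlgebra k g) * ((ι k y) * ((l.map fun z => (ι k z : UniversalEnvelopingAlgebra k g)).prod))
        - (ι k y) * ((ι k x) * ((l.map fun z => (ι k z : UniversalEnvelopingAlgebra k g)).prod))
        = (ι k ⁅x, y⁆ : UniversalEnvelopingAlgebra k g) * (l.map fun z => (ι k z : UniversalEnvelopingAlgebra k g)).prod := by
      rw [LieHom.map_lie (ι k)]
      simp [Ring.lie_def, sub_mul, mul_assoc]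
    rw [this]
    have := prod_mem_lengthFiltration k g (m := l.length + 1 + 1) (⁅x, y⁆ :: l) (by simp)
    simpa only [List.map_cons, List.prod_cons, LieHom.map_lie] using this
  | trans h₁ h₂ ih₁ ih₂ =>
    have hlen := h₁.length_eq
    have h := Submodule.add_mem _ ih₁ (hlen ▸ ih₂)
    rwa [sub_add_sub_cancel'] at h

end

/-- For a finite-dimensional Lie algebra over a field of characteristic zero
with an ordered basis, for any admissible (weakly increasing) index sequence
`α : Fin m → Fin n` and any permutation `σ ∈ S_m`, the product
`z_{α(σ 1)} ⋯ z_{α(σ m)}` equals `z_{α 1} ⋯ z_{α m}` modulo a linear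
combination of products of fewer than `m` generators. -/
theorem pbw_triangularity (k : Type*) [Field k] [CharZero k]
    (g : Type*) [LieRing g] [LieAlgebra k g] [FiniteDimensional k g]
    (n : ℕ) (b : Module.Basis (Fin n) k g)
    (m : ℕ) (α : Fin m → Fin n) (hα : Monotone α)
    (σ : Equiv.Perm (Fin m)) :
    (List.ofFn fun i => (ι k (b (α (σ i))) : UniversalEnvelopingAlgebra k g)).prod -
        (List.ofFn fun i => (ι k (b (α i)) : UniversalEnvelopingAlgebra k g)).prod ∈
      lengthFiltration k g m := by
  have hperm : (List.ofFn fun i => b (α i)).Perm (List.ofFn fun i => b (α (σ i))) :=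
    (Equiv.Perm.ofFn_comp_perm σ (fun i => b (α i))).symm
  have := perm_sub_mem k g hperm
  simpa [List.map_ofFn, Function.comp_def] using this
end
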